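/- (Energy-norm error recursion for the implicit θ-scheme.) Let H and K be real inner product spaces, B : H → K a linear map, τ > 0, θ ∈ [1/2, 1], N ∈ ℕ, and let η⁰, …, η^N ∈ H and r¹, …, r^N ∈ H satisfy, for every 1 ≤ n ≤ N and every v ∈ H, ⟨(ηⁿ − ηⁿ⁻¹)/τ, v⟩ + ⟨B(θ·ηⁿ + (1−θ)·ηⁿ⁻¹), B v⟩ = ⟨rⁿ, v⟩. Then for every 0 ≤ n ≤ N, ‖B ηⁿ‖² ≤ ‖B η⁰‖² + (τ/2) · Σ_{j=1}^{n} ‖rʲ‖². -/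

import Mathlib

open scoped RealInnerProductSpace

theorem theta_scheme_energy_error_recursion
    {H K : Type*} [NormedAddCommGroup H] [InnerProductSpace ℝ H]
    [NormedAddCommGroup K] [InnerProductSpace ℝ K]
    (B : H →ₗ[ℝ] K) (τ θ : ℝ) (hτ : 0 < τ) (hθ : θ ∈ Set.Icc (1/2 : ℝ) 1)
    (N : ℕ) (η r : ℕ → H)
    (hrec : ∀ n, 1 ≤ n → n ≤ N → ∀ v : H,
      ⟪(1 / τ) • (η n - η (n - 1)), v⟫ +
        ⟪B (θ • η n + (1 - θ) • η (n - 1)), B v⟫ = ⟪r n, v⟫) :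
    ∀ n ≤ N, ‖B (η n)‖^2 ≤ ‖B (η 0)‖^2 + (τ / 2) * ∑ j ∈ Finset.Icc 1 n, ‖r j‖^2 := by
  intro n hn
  induction n with
  | zero => simp
  | succ m ih =>
    have hm : m ≤ N := le_trans (Nat.le_succ m) hn
    have ihm := ih hm
    -- step estimate
    have key := hrec (m + 1) (Nat.le_add_left 1 m) hn (η (m + 1) - η m)
    simp only [Nat.add_sub_cancel] at key
    set v : H := η (m + 1) - η m with hv
    set a : K := B (η (m + 1)) with ha
    set b : K := B (η m) with hb
    have hBv : B v = a - b := by simp [hv, ha, hb, map_sub]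
    have hB2 : B (θ • η (m + 1) + (1 - θ) • η m) = θ • a + (1 - θ) • b := by
      simp [ha, hb, map_add, map_smul]
    rw [hBv, hB2] at key
    have h1 : ⟪(1 / τ) • v, v⟫ = (1 / τ) * ‖v‖ ^ 2 := by
      rw [real_inner_smul_left, real_inner_self_eq_norm_sq]
    have h2 : ⟪θ • a + (1 - θ) • b, a - b⟫ =
        θ * ‖a‖ ^ 2 - (1 - θ) * ‖b‖ ^ 2 - (2 * θ - 1) * ⟪a, b⟫ := by
      simp only [inner_add_left, inner_sub_right, real_inner_smul_left,
        real_inner_self_eq_norm_sq]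
      rw [real_inner_comm b a]
      ring
    have h3 : ‖a - b‖ ^ 2 = ‖a‖ ^ 2 + ‖b‖ ^ 2 - 2 * ⟪a, b⟫ := by
      rw [← real_inner_self_eq_norm_sq]
      simp only [inner_sub_left, inner_sub_right, real_inner_self_eq_norm_sq]
      rw [real_inner_comm b a]
      ring
    have hC : ⟪r (m + 1), v⟫ ≤ ‖r (m + 1)‖ * ‖v‖ := real_inner_le_norm _ _
    rw [h1, h2] at key
    have hab : (0:ℝ) ≤ ‖a - b‖ ^ 2 := sq_nonneg _
    have hθ1 : 1 / 2 ≤ θ := hθ.1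
    have hyoung : ‖r (m + 1)‖ * ‖v‖ ≤ τ / 4 * ‖r (m + 1)‖ ^ 2 + 1 / τ * ‖v‖ ^ 2 := by
      rw [← sub_nonneg]
      have heq : τ / 4 * ‖r (m + 1)‖ ^ 2 + 1 / τ * ‖v‖ ^ 2 - ‖r (m + 1)‖ * ‖v‖ =
          (τ * ‖r (m + 1)‖ - 2 * ‖v‖) ^ 2 / (4 * τ) := by
        field_simp
        ring
      rw [heq]
      positivity
    have hmid : (‖a‖ ^ 2 - ‖b‖ ^ 2) / 2 ≤
        θ * ‖a‖ ^ 2 - (1 - θ) * ‖b‖ ^ 2 - (2 * θ - 1) * ⟪a, b⟫ := by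
      nlinarith [mul_nonneg (by linarith : (0:ℝ) ≤ θ - 1/2) hab, h3]
    have step : ‖a‖ ^ 2 ≤ ‖b‖ ^ 2 + (τ / 2) * ‖r (m + 1)‖ ^ 2 := by
      linarith [key, hC, hyoung, hmid]
    have hsum : ∑ j ∈ Finset.Icc 1 (m + 1), ‖r j‖ ^ 2 =
        (∑ j ∈ Finset.Icc 1 m, ‖r j‖ ^ 2) + ‖r (m + 1)‖ ^ 2 := by
      rw [Finset.sum_Icc_succ_top (Nat.le_add_left 1 m)]
    rw [hsum]
    have : (0:ℝ) < τ / 2 := by linarith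
    nlinarith [ihm, step]
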